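/- Let λ be a real number with 0 < λ < 1, and for each integer k ≥ 0 define t_k := √(λ/(1+λ+λ²))·((1−λ^k)(1−λ^{k+3}))/((1−λ^{k+1})(1−λ^{k+2})) and r_k := ((1+λ)²/(1+λ+λ²))·((1−λ^k)(1−λ^{k+2}))/(1−λ^{k+1})². Then for every k ≥ 1, r_k = 1 + t_{k−1}·t_k. -/

import Mathlib

/-- The closed forms for the slice generating functions of simple triangulations satisfy
`r_k = 1 + t_{k-1}·t_k` for `k ≥ 1`. -/
theorem stmt11 (lam : ℝ) (hlam0 : 0 < lam) (hlam1 : lam < 1)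
    (t r : ℕ → ℝ)
    (ht : ∀ k, t k = Real.sqrt (lam / (1 + lam + lam ^ 2))
        * ((1 - lam ^ k) * (1 - lam ^ (k + 3)))
        / ((1 - lam ^ (k + 1)) * (1 - lam ^ (k + 2))))
    (hr : ∀ k, r k = ((1 + lam) ^ 2 / (1 + lam + lam ^ 2))
        * ((1 - lam ^ k) * (1 - lam ^ (k + 2))) / (1 - lam ^ (k + 1)) ^ 2) :
    ∀ k, 1 ≤ k → r k = 1 + t (k - 1) * t k := by
  have hs : (0:ℝ) < 1 + lam + lam ^ 2 := by nlinarith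
  have hne : ∀ n : ℕ, 1 ≤ n → (1 : ℝ) - lam ^ n ≠ 0 := by
    intro n hn
    have : lam ^ n < 1 := pow_lt_one₀ hlam0.le hlam1 (by omega)
    linarith
  have hsqrt : Real.sqrt (lam / (1 + lam + lam ^ 2)) *
      Real.sqrt (lam / (1 + lam + lam ^ 2)) = lam / (1 + lam + lam ^ 2) :=
    Real.mul_self_sqrt (by positivity)
  rintro k hk
  obtain ⟨m, rfl⟩ : ∃ m, k = m + 1 := ⟨k - 1, by omega⟩
  rw [hr, ht, ht]
  simp only [Nat.add_sub_cancel]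
  rw [div_mul_div_comm]
  rw [show ∀ A C : ℝ, (Real.sqrt (lam / (1 + lam + lam ^ 2)) * A) *
      (Real.sqrt (lam / (1 + lam + lam ^ 2)) * C)
      = (Real.sqrt (lam / (1 + lam + lam ^ 2)) * Real.sqrt (lam / (1 + lam + lam ^ 2))) * (A * C)
      from fun A C => by ring, hsqrt]
  have h1 := hne (m+1) (by omega)
  have h2 := hne (m+2) (by omega)
  have h3 := hne (m+3) (by omega)
  have h4 := hne (m+4) (by omega)
  simp only [show m + 1 + 3 = m + 4 from rfl, show m + 1 + 2 = m + 3 from rfl,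
    show m + 1 + 1 = m + 2 from rfl, show m + 3 = m + 3 from rfl] at *
  simp only [pow_add, pow_one] at *
  set x := lam ^ m with hx
  rw [mul_comm] at h1 h2 h3 h4
  field_simp
  ring
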